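/- In a multi-winner approval voting instance, a feasible CC utility vector is NTU-core-stable if and only if its witnessing committee satisfies justified representation (JR). Precisely: let α : V → {0,1} and W a size-k committee with α(v) = 1 iff A(v) ∩ W ≠ ∅. Then [no coalition V' ⊆ V admits a committee W' with |W'| ≤ ⌊|V'|·k/|V|⌋ such that every v ∈ V' has α(v) = 0 and A(v) ∩ W' ≠ ∅] if and only if [for every coalition V' with |V'| ≥ ⌈|V|/k⌉ and ⋂_{v∈V'} A(v) ≠ ∅, there exists v ∈ V' with A(v) ∩ W ≠ ∅]. -/

import Mathlib

/-- ceiling property: `n ≤ ((n+k-1)/k) * k` for `k ≥ 1`. -/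
lemma ceil_mul_ge (n k : ℕ) (hk : 1 ≤ k) : n ≤ (n + k - 1) / k * k := by
  rw [Nat.mul_comm]
  have hmod := Nat.div_add_mod (n + k - 1) k
  have hlt : (n + k - 1) % k < k := Nat.mod_lt _ hk
  omega

/-- A feasible CC utility vector (induced by committee `W`) is NTU-core-stable
iff `W` satisfies justified representation. -/
theorem stmt7 {C V : Type*} [Fintype C] [Fintype V] [Nonempty V] [DecidableEq C]
    (A : V → Finset C) (k : ℕ) (hk : 1 ≤ k) (hkC : k ≤ Fintype.card C)
    (W : Finset C) (hW : W.card = k) :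
    (¬ ∃ V' : Finset V, V'.Nonempty ∧ ∃ W' : Finset C,
        W'.card ≤ V'.card * k / Fintype.card V ∧
        ∀ v ∈ V', A v ∩ W = ∅ ∧ (A v ∩ W').Nonempty) ↔
    (∀ V' : Finset V, (Fintype.card V + k - 1) / k ≤ V'.card →
        (∃ c : C, ∀ v ∈ V', c ∈ A v) → ∃ v ∈ V', (A v ∩ W).Nonempty) := by
  set n := Fintype.card V with hn
  have hn1 : 1 ≤ n := Fintype.card_pos
  set q := (n + k - 1) / k with hq
  have hq1 : 1 ≤ q := by
    rw [hq, Nat.le_div_iff_mul_le (by omega)]; omega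
  have hqk : n ≤ q * k := ceil_mul_ge n k hk
  have hqk' : q * k ≤ n + k - 1 := Nat.div_mul_le_self _ _
  constructor
  · -- core stability → JR
    intro hcore V' hcard ⟨c, hc⟩
    by_contra hcon
    push_neg at hcon
    apply hcore
    refine ⟨V', ?_, {c}, ?_, ?_⟩
    · exact Finset.card_pos.mp (by omega)
    · rw [Finset.card_singleton, Nat.le_div_iff_mul_le (by omega), one_mul]
      calc n ≤ q * k := hqk
        _ ≤ V'.card * k := Nat.mul_le_mul_right _ hcard
    · intro v hv
      refine ⟨hcon v hv, ⟨c, ?_⟩⟩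
      simp [hc v hv]
  · -- JR → core stability
    rintro hJR ⟨V', hV'ne, W', hW'card, hblock⟩
    set m := V'.card
    set w := W'.card with hw
    have hw1 : 1 ≤ w := by
      obtain ⟨v, hv⟩ := hV'ne
      obtain ⟨x, hx⟩ := (hblock v hv).2
      have : W'.Nonempty := ⟨x, (Finset.mem_inter.mp hx).2⟩
      exact Finset.card_pos.mpr this
    have hwn : w * n ≤ m * k := by
      rw [← Nat.le_div_iff_mul_le (by omega)]; exact hW'card
    -- pigeonhole: some c ∈ W' is approved by at least q voters of V'
    have hpig : ∃ c ∈ W', q ≤ (V'.filter (fun v => c ∈ A v)).card := by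
      by_contra hcon
      push_neg at hcon
      have hsum : m ≤ ∑ c ∈ W', (V'.filter (fun v => c ∈ A v)).card := by
        have h1 : ∀ v ∈ V', 1 ≤ (W'.filter (fun c => c ∈ A v)).card := by
          intro v hv
          obtain ⟨x, hx⟩ := (hblock v hv).2
          rw [Finset.mem_inter] at hx
          exact Finset.card_pos.mpr ⟨x, Finset.mem_filter.mpr ⟨hx.2, hx.1⟩⟩
        calc m = ∑ _v ∈ V', 1 := by simp; rfl
          _ ≤ ∑ v ∈ V', (W'.filter (fun c => c ∈ A v)).card :=
            Finset.sum_le_sum h1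
          _ = ∑ v ∈ V', ∑ c ∈ W', if c ∈ A v then 1 else 0 := by
            simp only [Finset.card_filter]
          _ = ∑ c ∈ W', ∑ v ∈ V', if c ∈ A v then 1 else 0 := Finset.sum_comm
          _ = ∑ c ∈ W', (V'.filter (fun v => c ∈ A v)).card := by
            simp only [Finset.card_filter]
      have hub : ∑ c ∈ W', (V'.filter (fun v => c ∈ A v)).card ≤ w * (q - 1) := by
        calc ∑ c ∈ W', (V'.filter (fun v => c ∈ A v)).card
            ≤ ∑ _c ∈ W', (q - 1) := Finset.sum_le_sum (fun c hc => by
              have := hcon c hc; omega)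
          _ = w * (q - 1) := by rw [Finset.sum_const, smul_eq_mul]
      have h2 : (q - 1) * k ≤ n - 1 := by
        have : (q - 1) * k = q * k - 1 * k := by rw [Nat.sub_mul]
        omega
      have : m * k < m * k := by
        calc m * k ≤ (w * (q - 1)) * k := Nat.mul_le_mul_right _ (by omega)
          _ = w * ((q - 1) * k) := by ring
          _ ≤ w * (n - 1) := Nat.mul_le_mul_left _ h2
          _ < w * n := by
              have hw0 : 0 < w := by omega
              exact (Nat.mul_lt_mul_left hw0).mpr (by omega)
          _ ≤ m * k := hwn
      exact absurd this (lt_irrefl _)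
    obtain ⟨c, hcW', hcq⟩ := hpig
    obtain ⟨v, hv, hvW⟩ := hJR (V'.filter (fun v => c ∈ A v)) hcq
      ⟨c, fun v hv => (Finset.mem_filter.mp hv).2⟩
    have : A v ∩ W = ∅ := (hblock v (Finset.mem_filter.mp hv).1).1
    rw [this] at hvW
    exact Finset.not_nonempty_empty hvW
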